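/- There exists a constant K, depending only on B, T, ‖M‖ and ‖M⁻¹‖, such that for every initial condition the solution (u,v) of the variational system satisfies: ‖u(·)‖_∞ + ‖v(·)‖_∞ ≤ K (‖p(·)‖_∞² + ‖f(q(·))‖_∞); ‖ü(·)‖_∞ ≤ K (‖p(·)‖_∞³ + ‖p(·)‖_∞ ‖f(q(·))‖_∞ + ‖f(q(·))‖_∞); and ‖v̈(·)‖_∞ ≤ K (‖p(·)‖_∞² + ‖f(q(·))‖_∞). -/

import Mathlib

open MeasureTheory Matrix Filter

/-- One leapfrog (Störmer–Verlet) step of length `h` for the Hamiltonian system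
`dq/dt = M⁻¹p`, `dp/dt = f(q)` (here `Minv = M⁻¹`):
`q' = q + h M⁻¹p + (h²/2) M⁻¹ f(q)`, `p' = p + (h/2) f(q) + (h/2) f(q')`. -/
noncomputable def leapfrogStep (m : ℕ) (Minv : Matrix (Fin m) (Fin m) ℝ)
    (f : (Fin m → ℝ) → (Fin m → ℝ)) (h : ℝ)
    (x : (Fin m → ℝ) × (Fin m → ℝ)) : (Fin m → ℝ) × (Fin m → ℝ) :=
  (x.1 + h • Minv.mulVec x.2 + (h ^ 2 / 2) • Minv.mulVec (f x.1),
   x.2 + (h / 2) • f x.1 +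
     (h / 2) • f (x.1 + h • Minv.mulVec x.2 + (h ^ 2 / 2) • Minv.mulVec (f x.1)))

/-- The leapfrog approximation `ψ_h^{(T)}` of the time-`T` Hamiltonian flow:
`⌊T/h⌋` leapfrog steps of length `h`. -/
noncomputable def leapfrogT (m : ℕ) (Minv : Matrix (Fin m) (Fin m) ℝ)
    (f : (Fin m → ℝ) → (Fin m → ℝ)) (T h : ℝ)
    (x : (Fin m → ℝ) × (Fin m → ℝ)) : (Fin m → ℝ) × (Fin m → ℝ) :=
  (leapfrogStep m Minv f h)^[⌊T / h⌋₊] x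

/-- The Hamiltonian `H(q,p) = (1/2)⟨p, M⁻¹p⟩ + V(q)` (here `Minv = M⁻¹`). -/
noncomputable def Ham (m : ℕ) (Minv : Matrix (Fin m) (Fin m) ℝ)
    (V : (Fin m → ℝ) → ℝ) (x : (Fin m → ℝ) × (Fin m → ℝ)) : ℝ :=
  (1 / 2) * (x.2 ⬝ᵥ Minv.mulVec x.2) + V x.1

/-- The third time derivative `d³p/dt³ = f''(q)(M⁻¹p, M⁻¹p) + f'(q) M⁻¹ f(q)`
along a solution `(q(t), p(t))` of the Hamiltonian equations. -/
noncomputable def dddp (m : ℕ) (Minv : Matrix (Fin m) (Fin m) ℝ)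
    (f : (Fin m → ℝ) → (Fin m → ℝ)) (qt pt : ℝ → (Fin m → ℝ)) (t : ℝ) :
    Fin m → ℝ :=
  (fderiv ℝ (fderiv ℝ f) (qt t)) (Minv.mulVec (pt t)) (Minv.mulVec (pt t)) +
    (fderiv ℝ f (qt t)) (Minv.mulVec (f (qt t)))

/-- The third time derivative `d³q/dt³ = M⁻¹ f'(q) M⁻¹ p` along a solution
`(q(t), p(t))` of the Hamiltonian equations. -/
noncomputable def dddq (m : ℕ) (Minv : Matrix (Fin m) (Fin m) ℝ)
    (f : (Fin m → ℝ) → (Fin m → ℝ)) (qt pt : ℝ → (Fin m → ℝ)) (t : ℝ) :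
    Fin m → ℝ :=
  Minv.mulVec ((fderiv ℝ f (qt t)) (Minv.mulVec (pt t)))

/-- The sup norm `‖g(·)‖_∞ = sup_{0 ≤ t ≤ T} |g(t)|`. -/
noncomputable def supIcc (m : ℕ) (T : ℝ) (g : ℝ → (Fin m → ℝ)) : ℝ :=
  ⨆ t : Set.Icc (0:ℝ) T, ‖g (t : ℝ)‖

open Set

lemma supIcc_nonneg (m : ℕ) (T : ℝ) (g : ℝ → (Fin m → ℝ)) : 0 ≤ supIcc m T g := by
  apply Real.iSup_nonneg; intro t; exact norm_nonneg _

lemma supIcc_le {m : ℕ} {T : ℝ} (hT : 0 ≤ T) {g : ℝ → (Fin m → ℝ)} {c : ℝ}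
    (hc : ∀ t ∈ Icc (0:ℝ) T, ‖g t‖ ≤ c) : supIcc m T g ≤ c := by
  have : Nonempty (Icc (0:ℝ) T) := ⟨⟨0, left_mem_Icc.2 hT⟩⟩
  exact ciSup_le fun t => hc t t.2

lemma le_supIcc {m : ℕ} {T : ℝ} {g : ℝ → (Fin m → ℝ)}
    (hg : ContinuousOn g (Icc (0:ℝ) T)) {t : ℝ} (ht : t ∈ Icc (0:ℝ) T) :
    ‖g t‖ ≤ supIcc m T g := by
  have hbdd : BddAbove (Set.range fun t : Icc (0:ℝ) T => ‖g (t:ℝ)‖) := by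
    have hc : IsCompact ((fun s => ‖g s‖) '' Icc (0:ℝ) T) :=
      isCompact_Icc.image_of_continuousOn hg.norm
    have he : (Set.range fun t : Icc (0:ℝ) T => ‖g (t:ℝ)‖) = (fun s => ‖g s‖) '' Icc (0:ℝ) T := by
      ext x; constructor
      · rintro ⟨⟨s, hs⟩, rfl⟩; exact ⟨s, hs, rfl⟩
      · rintro ⟨s, hs, rfl⟩; exact ⟨⟨s, hs⟩, rfl⟩
    rw [he]; exact hc.bddAbove
  exact le_ciSup hbdd ⟨t, ht⟩

lemma gronwall_simple {Kg ε x T : ℝ} (hK : 1 ≤ Kg) (hε : 0 ≤ ε) (hx : 0 ≤ x) (hxT : x ≤ T) :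
    gronwallBound 0 Kg ε x ≤ ε * Real.exp (Kg * T) := by
  rw [gronwallBound_of_K_ne_0 (by linarith)]
  have hKg0 : (0:ℝ) ≤ Kg := by linarith
  have h1 : Real.exp (Kg * x) ≤ Real.exp (Kg * T) :=
    Real.exp_le_exp.2 (mul_le_mul_of_nonneg_left hxT hKg0)
  have h3 : (1:ℝ) ≤ Real.exp (Kg * x) := Real.one_le_exp (by positivity)
  have h2 : ε / Kg ≤ ε := div_le_self hε hK
  calc 0 * Real.exp (Kg * x) + ε / Kg * (Real.exp (Kg * x) - 1)
      = ε / Kg * (Real.exp (Kg * x) - 1) := by ring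
    _ ≤ ε * (Real.exp (Kg * x) - 1) := mul_le_mul_of_nonneg_right h2 (by linarith)
    _ ≤ ε * Real.exp (Kg * T) := mul_le_mul_of_nonneg_left (by linarith) hε

section AuxCalc


variable {E : Type*} [NormedAddCommGroup E] [NormedSpace ℝ E]

lemma mvt_poly {ψ ψ' : ℝ → E} {a b C : ℝ} {k : ℕ}
    (hψ : ∀ t ∈ Icc a b, HasDerivAt ψ (ψ' t) t) (hψa : ψ a = 0)
    (hbd : ∀ t ∈ Icc a b, ‖ψ' t‖ ≤ C * (t - a) ^ k) :
    ∀ t ∈ Icc a b, ‖ψ t‖ ≤ C * (t - a) ^ (k + 1) / (k + 1) := by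
  intro t ht
  have hB : ∀ x : ℝ, HasDerivAt (fun x => C * (x - a) ^ (k + 1) / (k + 1)) (C * (x - a) ^ k) x := by
    intro x
    have h1 : HasDerivAt (fun x : ℝ => C * (x - a) ^ (k + 1) / (k + 1))
        (C * ((k + 1 : ℕ) * (x - a) ^ k * 1) / (k + 1)) x :=
      ((((hasDerivAt_id x).sub_const a).pow (k + 1)).const_mul C).div_const _
    convert h1 using 1
    field_simp
    push_cast
    ring
  refine image_norm_le_of_norm_deriv_right_le_deriv_boundary
    (f := ψ) (f' := ψ') (a := a) (b := b)
    (fun x hx => (hψ x hx).continuousAt.continuousWithinAt)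
    (fun x hx => (hψ x (Ico_subset_Icc_self hx)).hasDerivWithinAt)
    ?_ hB (fun x hx => hbd x (Ico_subset_Icc_self hx)) ht
  simp [hψa]

lemma taylor3_right {g g1 g2 g3 : ℝ → E} {a b G : ℝ} (hb : b ∈ Icc a b)
    (hg : ∀ t ∈ Icc a b, HasDerivAt g (g1 t) t)
    (hg1 : ∀ t ∈ Icc a b, HasDerivAt g1 (g2 t) t)
    (hg2 : ∀ t ∈ Icc a b, HasDerivAt g2 (g3 t) t)
    (hG : ∀ t ∈ Icc a b, ‖g3 t‖ ≤ G) :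
    ‖g b - g a - (b - a) • g1 a - ((b - a) ^ 2 / 2) • g2 a‖ ≤ G * (b - a) ^ 3 / 6 := by
  have h2 : ∀ t ∈ Icc a b, ‖g2 t - g2 a‖ ≤ G * (t - a) := by
    have hd : ∀ t ∈ Icc a b, HasDerivAt (fun x => g2 x - g2 a) (g3 t) t :=
      fun t ht => (hg2 t ht).sub_const _
    have hbd : ∀ t ∈ Icc a b, ‖g3 t‖ ≤ G * (t - a) ^ 0 := by
      intro t ht; rw [pow_zero, mul_one]; exact hG t ht
    have h := mvt_poly (a := a) (b := b) (C := G) (k := 0) hd (sub_self _) hbd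
    intro t ht; have := h t ht; norm_num at this; exact this
  have h1 : ∀ t ∈ Icc a b, ‖g1 t - g1 a - (t - a) • g2 a‖ ≤ G * (t - a) ^ 2 / 2 := by
    have hd : ∀ t ∈ Icc a b,
        HasDerivAt (fun x => g1 x - g1 a - (x - a) • g2 a) (g2 t - g2 a) t := by
      intro t ht
      have hs : HasDerivAt (fun x : ℝ => (x - a) • g2 a) ((1 : ℝ) • g2 a) t :=
        ((hasDerivAt_id t).sub_const a).smul_const _
      simpa [one_smul, Pi.sub_def] using ((hg1 t ht).sub_const (g1 a)).sub hs
    have hbd : ∀ t ∈ Icc a b, ‖g2 t - g2 a‖ ≤ G * (t - a) ^ 1 := by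
      intro t ht; rw [pow_one]; exact h2 t ht
    have h := mvt_poly (a := a) (b := b) (C := G) (k := 1) hd (by simp) hbd
    intro t ht; have := h t ht; norm_num at this; exact this
  have h0 : ∀ t ∈ Icc a b,
      ‖g t - g a - (t - a) • g1 a - ((t - a) ^ 2 / 2) • g2 a‖ ≤ G / 2 * (t - a) ^ 3 / 3 := by
    have hd : ∀ t ∈ Icc a b,
        HasDerivAt (fun x => g x - g a - (x - a) • g1 a - ((x - a) ^ 2 / 2) • g2 a)
          (g1 t - g1 a - (t - a) • g2 a) t := by
      intro t ht
      have hs1 : HasDerivAt (fun x : ℝ => (x - a) • g1 a) ((1 : ℝ) • g1 a) t :=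
        ((hasDerivAt_id t).sub_const a).smul_const _
      have hs2 : HasDerivAt (fun x : ℝ => ((x - a) ^ 2 / 2) • g2 a)
          ((2 * (t - a) ^ 1 * 1 / 2) • g2 a) t :=
        ((((hasDerivAt_id t).sub_const a).pow 2).div_const 2).smul_const _
      have := (((hg t ht).sub_const (g a)).sub hs1).sub hs2
      simp only [Pi.sub_def] at this
      convert this using 1
      module
    have hbd : ∀ t ∈ Icc a b, ‖g1 t - g1 a - (t - a) • g2 a‖ ≤ G / 2 * (t - a) ^ 2 := by
      intro t ht
      calc ‖g1 t - g1 a - (t - a) • g2 a‖ ≤ G * (t - a) ^ 2 / 2 := h1 t ht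
        _ = G / 2 * (t - a) ^ 2 := by ring
    have h := mvt_poly (a := a) (b := b) (C := G / 2) (k := 2) hd (by simp) hbd
    intro t ht; have := h t ht; norm_num at this; exact this
  calc ‖g b - g a - (b - a) • g1 a - ((b - a) ^ 2 / 2) • g2 a‖ ≤
      G / 2 * (b - a) ^ 3 / 3 := h0 b hb
    _ = G * (b - a) ^ 3 / 6 := by ring

lemma taylor2_right {g g1 g2 : ℝ → E} {a b G : ℝ} (hb : b ∈ Icc a b)
    (hg : ∀ t ∈ Icc a b, HasDerivAt g (g1 t) t)
    (hg1 : ∀ t ∈ Icc a b, HasDerivAt g1 (g2 t) t)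
    (hG : ∀ t ∈ Icc a b, ‖g2 t‖ ≤ G) :
    ‖g b - g a - (b - a) • g1 a‖ ≤ G * (b - a) ^ 2 / 2 := by
  have h1 : ∀ t ∈ Icc a b, ‖g1 t - g1 a‖ ≤ G * (t - a) := by
    have hd : ∀ t ∈ Icc a b, HasDerivAt (fun x => g1 x - g1 a) (g2 t) t :=
      fun t ht => (hg1 t ht).sub_const _
    have hbd : ∀ t ∈ Icc a b, ‖g2 t‖ ≤ G * (t - a) ^ 0 := by
      intro t ht; rw [pow_zero, mul_one]; exact hG t ht
    have h := mvt_poly (a := a) (b := b) (C := G) (k := 0) hd (sub_self _) hbd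
    intro t ht; have := h t ht; norm_num at this; exact this
  have h0 : ∀ t ∈ Icc a b, ‖g t - g a - (t - a) • g1 a‖ ≤ G * (t - a) ^ 2 / 2 := by
    have hd : ∀ t ∈ Icc a b,
        HasDerivAt (fun x => g x - g a - (x - a) • g1 a) (g1 t - g1 a) t := by
      intro t ht
      have hs : HasDerivAt (fun x : ℝ => (x - a) • g1 a) ((1 : ℝ) • g1 a) t :=
        ((hasDerivAt_id t).sub_const a).smul_const _
      simpa [one_smul, Pi.sub_def] using ((hg t ht).sub_const (g a)).sub hs
    have hbd : ∀ t ∈ Icc a b, ‖g1 t - g1 a‖ ≤ G * (t - a) ^ 1 := by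
      intro t ht; rw [pow_one]; exact h1 t ht
    have h := mvt_poly (a := a) (b := b) (C := G) (k := 1) hd (by simp) hbd
    intro t ht; have := h t ht; norm_num at this; exact this
  exact h0 b hb

lemma taylor3_left {g g1 g2 g3 : ℝ → E} {a b G : ℝ} (hab : a ≤ b)
    (hg : ∀ t ∈ Icc a b, HasDerivAt g (g1 t) t)
    (hg1 : ∀ t ∈ Icc a b, HasDerivAt g1 (g2 t) t)
    (hg2 : ∀ t ∈ Icc a b, HasDerivAt g2 (g3 t) t)
    (hG : ∀ t ∈ Icc a b, ‖g3 t‖ ≤ G) :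
    ‖g a - g b + (b - a) • g1 b - ((b - a) ^ 2 / 2) • g2 b‖ ≤ G * (b - a) ^ 3 / 6 := by
  set c := a + b with hc
  have hmem : ∀ x ∈ Icc a b, c - x ∈ Icc a b := by
    intro x hx
    exact ⟨by simp only [hc]; linarith [hx.2], by simp only [hc]; linarith [hx.1]⟩
  have hinner : ∀ x : ℝ, HasDerivAt (fun y : ℝ => c - y) (-1 : ℝ) x := by
    intro x
    simpa [Pi.sub_def] using (hasDerivAt_const x c).sub (hasDerivAt_id x)
  have hgr : ∀ x ∈ Icc a b, HasDerivAt (fun y => g (c - y)) ((-1 : ℝ) • g1 (c - x)) x :=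
    fun x hx => (hg (c - x) (hmem x hx)).scomp x (hinner x)
  have hgr1 : ∀ x ∈ Icc a b,
      HasDerivAt (fun y => (-1 : ℝ) • g1 (c - y)) (g2 (c - x)) x := by
    intro x hx
    have := ((hg1 (c - x) (hmem x hx)).scomp x (hinner x)).const_smul (-1 : ℝ)
    simpa [smul_smul, Function.comp_def, Pi.neg_def] using this
  have hgr2 : ∀ x ∈ Icc a b, HasDerivAt (fun y => g2 (c - y)) ((-1 : ℝ) • g3 (c - x)) x :=
    fun x hx => (hg2 (c - x) (hmem x hx)).scomp x (hinner x)
  have hGr : ∀ x ∈ Icc a b, ‖(-1 : ℝ) • g3 (c - x)‖ ≤ G := by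
    intro x hx
    rw [norm_smul]
    simpa using hG (c - x) (hmem x hx)
  have h := taylor3_right (g := fun y => g (c - y)) (g1 := fun y => (-1 : ℝ) • g1 (c - y))
    (g2 := fun y => g2 (c - y)) (g3 := fun y => (-1 : ℝ) • g3 (c - y))
    (right_mem_Icc.2 hab) hgr hgr1 hgr2 hGr
  have e1 : c - b = a := by simp [hc]
  have e2 : c - a = b := by simp [hc]
  beta_reduce at h
  rw [e1, e2] at h
  calc ‖g a - g b + (b - a) • g1 b - ((b - a) ^ 2 / 2) • g2 b‖
      = ‖g a - g b - (b - a) • (-1 : ℝ) • g1 b - ((b - a) ^ 2 / 2) • g2 b‖ := by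
        congr 1; module
    _ ≤ G * (b - a) ^ 3 / 6 := h

lemma taylor2_left {g g1 g2 : ℝ → E} {a b G : ℝ} (hab : a ≤ b)
    (hg : ∀ t ∈ Icc a b, HasDerivAt g (g1 t) t)
    (hg1 : ∀ t ∈ Icc a b, HasDerivAt g1 (g2 t) t)
    (hG : ∀ t ∈ Icc a b, ‖g2 t‖ ≤ G) :
    ‖g a - g b + (b - a) • g1 b‖ ≤ G * (b - a) ^ 2 / 2 := by
  set c := a + b with hc
  have hmem : ∀ x ∈ Icc a b, c - x ∈ Icc a b := by
    intro x hx
    exact ⟨by simp only [hc]; linarith [hx.2], by simp only [hc]; linarith [hx.1]⟩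
  have hinner : ∀ x : ℝ, HasDerivAt (fun y : ℝ => c - y) (-1 : ℝ) x := by
    intro x
    simpa [Pi.sub_def] using (hasDerivAt_const x c).sub (hasDerivAt_id x)
  have hgr : ∀ x ∈ Icc a b, HasDerivAt (fun y => g (c - y)) ((-1 : ℝ) • g1 (c - x)) x :=
    fun x hx => (hg (c - x) (hmem x hx)).scomp x (hinner x)
  have hgr1 : ∀ x ∈ Icc a b,
      HasDerivAt (fun y => (-1 : ℝ) • g1 (c - y)) (g2 (c - x)) x := by
    intro x hx
    have := ((hg1 (c - x) (hmem x hx)).scomp x (hinner x)).const_smul (-1 : ℝ)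
    simpa [smul_smul, Function.comp_def, Pi.neg_def] using this
  have hGr : ∀ x ∈ Icc a b, ‖g2 (c - x)‖ ≤ G := fun x hx => hG (c - x) (hmem x hx)
  have h := taylor2_right (g := fun y => g (c - y)) (g1 := fun y => (-1 : ℝ) • g1 (c - y))
    (g2 := fun y => g2 (c - y)) (right_mem_Icc.2 hab) hgr hgr1 hGr
  have e1 : c - b = a := by simp [hc]
  have e2 : c - a = b := by simp [hc]
  beta_reduce at h
  rw [e1, e2] at h
  calc ‖g a - g b + (b - a) • g1 b‖
      = ‖g a - g b - (b - a) • (-1 : ℝ) • g1 b‖ := by congr 1; module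
    _ ≤ G * (b - a) ^ 2 / 2 := h

lemma norm_comb5 (A X1 X2 Y1 Y2 : E) : ‖A - X1 - X2 - Y1 + Y2‖ ≤ ‖A‖ + ‖X1‖ + ‖X2‖ + ‖Y1‖ + ‖Y2‖ := by
  calc ‖A - X1 - X2 - Y1 + Y2‖ ≤ ‖A - X1 - X2 - Y1‖ + ‖Y2‖ := norm_add_le _ _
    _ ≤ (‖A - X1 - X2‖ + ‖Y1‖) + ‖Y2‖ := by gcongr; exact norm_sub_le _ _
    _ ≤ ((‖A - X1‖ + ‖X2‖) + ‖Y1‖) + ‖Y2‖ := by gcongr; exact norm_sub_le _ _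
    _ ≤ (((‖A‖ + ‖X1‖) + ‖X2‖) + ‖Y1‖) + ‖Y2‖ := by gcongr; exact norm_sub_le _ _
    _ = ‖A‖ + ‖X1‖ + ‖X2‖ + ‖Y1‖ + ‖Y2‖ := by ring

/-- Landau-type estimate for the first derivative from bounds on the function and the
third derivative, on `[0, T]`, with a free step parameter `h ≤ T/4`. -/
lemma landau1 {g g1 g2 g3 : ℝ → E} {T F G h : ℝ} (hh : 0 < h) (hhT : h ≤ T / 4)
    (hg : ∀ t ∈ Icc 0 T, HasDerivAt g (g1 t) t)
    (hg1 : ∀ t ∈ Icc 0 T, HasDerivAt g1 (g2 t) t)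
    (hg2 : ∀ t ∈ Icc 0 T, HasDerivAt g2 (g3 t) t)
    (hF : ∀ t ∈ Icc 0 T, ‖g t‖ ≤ F) (hG : ∀ t ∈ Icc 0 T, ‖g3 t‖ ≤ G) :
    ∀ t ∈ Icc 0 T, ‖g1 t‖ ≤ 4 * F / h + G * h ^ 2 := by
  have hT4 : 0 < T := by linarith
  have hG0 : 0 ≤ G := le_trans (norm_nonneg _) (hG 0 ⟨le_refl 0, le_of_lt hT4⟩)
  intro t ht
  have key : 2 * h * ‖g1 t‖ ≤ 8 * F + 2 * G * h ^ 3 := by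
    rcases le_or_gt t (T / 2) with hcase | hcase
    · -- right-sided
      have hsub1 : Icc t (t + h) ⊆ Icc 0 T := Icc_subset_Icc ht.1 (by linarith [ht.1])
      have hsub2 : Icc t (t + 2 * h) ⊆ Icc 0 T := Icc_subset_Icc ht.1 (by linarith [ht.1])
      have hX1 := taylor3_right (a := t) (b := t + h) (G := G)
        (right_mem_Icc.2 (by linarith))
        (fun s hs => hg s (hsub1 hs)) (fun s hs => hg1 s (hsub1 hs))
        (fun s hs => hg2 s (hsub1 hs)) (fun s hs => hG s (hsub1 hs))
      have hX2 := taylor3_right (a := t) (b := t + 2 * h) (G := G)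
        (right_mem_Icc.2 (by linarith))
        (fun s hs => hg s (hsub2 hs)) (fun s hs => hg1 s (hsub2 hs))
        (fun s hs => hg2 s (hsub2 hs)) (fun s hs => hG s (hsub2 hs))
      rw [add_sub_cancel_left] at hX1 hX2
      set X1 := g (t + h) - g t - h • g1 t - (h ^ 2 / 2) • g2 t with hX1d
      set X2 := g (t + 2 * h) - g t - (2 * h) • g1 t - ((2 * h) ^ 2 / 2) • g2 t with hX2d
      have key2 : (2 * h) • g1 t = (4 : ℝ) • g (t + h) - g (t + 2 * h) - (3 : ℝ) • g t
          - (4 : ℝ) • X1 + X2 := by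
        rw [hX1d, hX2d]; module
      have hn : ‖(2 * h) • g1 t‖ ≤ 4 * F + F + 3 * F + 4 * (G * h ^ 3 / 6) + G * (2 * h) ^ 3 / 6 := by
        rw [key2]
        refine le_trans (norm_comb5 _ _ _ _ _) ?_
        have b1 : ‖(4 : ℝ) • g (t + h)‖ ≤ 4 * F := by
          rw [norm_smul]; simp only [Real.norm_ofNat]
          have := hF (t + h) (hsub1 (right_mem_Icc.2 (by linarith)))
          nlinarith [norm_nonneg (g (t+h))]
        have b2 : ‖g (t + 2 * h)‖ ≤ F := hF _ (hsub2 (right_mem_Icc.2 (by linarith)))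
        have b3 : ‖(3 : ℝ) • g t‖ ≤ 3 * F := by
          rw [norm_smul]; simp only [Real.norm_ofNat]
          have := hF t ht; nlinarith [norm_nonneg (g t)]
        have b4 : ‖(4 : ℝ) • X1‖ ≤ 4 * (G * h ^ 3 / 6) := by
          rw [norm_smul]; simp only [Real.norm_ofNat]; nlinarith [norm_nonneg X1]
        linarith [hX2]
      rw [norm_smul, Real.norm_eq_abs, abs_of_pos (by linarith : (0:ℝ) < 2 * h)] at hn
      nlinarith
    · -- left-sided
      have hsub1 : Icc (t - h) t ⊆ Icc 0 T := Icc_subset_Icc (by linarith) ht.2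
      have hsub2 : Icc (t - 2 * h) t ⊆ Icc 0 T := Icc_subset_Icc (by linarith) ht.2
      have hY1 := taylor3_left (a := t - h) (b := t) (G := G) (by linarith)
        (fun s hs => hg s (hsub1 hs)) (fun s hs => hg1 s (hsub1 hs))
        (fun s hs => hg2 s (hsub1 hs)) (fun s hs => hG s (hsub1 hs))
      have hY2 := taylor3_left (a := t - 2 * h) (b := t) (G := G) (by linarith)
        (fun s hs => hg s (hsub2 hs)) (fun s hs => hg1 s (hsub2 hs))
        (fun s hs => hg2 s (hsub2 hs)) (fun s hs => hG s (hsub2 hs))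
      rw [sub_sub_cancel] at hY1 hY2
      set Y1 := g (t - h) - g t + h • g1 t - (h ^ 2 / 2) • g2 t with hY1d
      set Y2 := g (t - 2 * h) - g t + (2 * h) • g1 t - ((2 * h) ^ 2 / 2) • g2 t with hY2d
      have key2 : (2 * h) • g1 t = (4 : ℝ) • Y1 - Y2 - (4 : ℝ) • g (t - h) - ((- 1 : ℝ)) • g (t - 2 * h) + (3:ℝ) • g t := by
        rw [hY1d, hY2d]; module
      have hn : ‖(2 * h) • g1 t‖ ≤ 4 * (G * h ^ 3 / 6) + G * (2 * h) ^ 3 / 6 + 4 * F + F + 3 * F := by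
        rw [key2]
        refine le_trans (norm_comb5 _ _ _ _ _) ?_
        have b1 : ‖(4 : ℝ) • Y1‖ ≤ 4 * (G * h ^ 3 / 6) := by
          rw [norm_smul]; simp only [Real.norm_ofNat]; nlinarith [norm_nonneg Y1]
        have b3 : ‖(4 : ℝ) • g (t - h)‖ ≤ 4 * F := by
          rw [norm_smul]; simp only [Real.norm_ofNat]
          have := hF (t - h) (hsub1 (left_mem_Icc.2 (by linarith)))
          nlinarith [norm_nonneg (g (t - h))]
        have b4 : ‖((-1 : ℝ)) • g (t - 2 * h)‖ ≤ F := by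
          rw [norm_smul]; simpa using hF (t - 2 * h) (hsub2 (left_mem_Icc.2 (by linarith)))
        have b5 : ‖(3 : ℝ) • g t‖ ≤ 3 * F := by
          rw [norm_smul]; simp only [Real.norm_ofNat]
          have := hF t ht; nlinarith [norm_nonneg (g t)]
        linarith [hY2]
      rw [norm_smul, Real.norm_eq_abs, abs_of_pos (by linarith : (0:ℝ) < 2 * h)] at hn
      nlinarith
  have hF0 : 0 ≤ F := le_trans (norm_nonneg _) (hF t ht)
  have h2h : 0 < 2 * h := by linarith
  have : ‖g1 t‖ ≤ (8 * F + 2 * G * h ^ 3) / (2 * h) := by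
    rw [le_div_iff₀ h2h]; nlinarith [key]
  calc ‖g1 t‖ ≤ (8 * F + 2 * G * h ^ 3) / (2 * h) := this
    _ = 4 * F / h + G * h ^ 2 := by field_simp; ring

/-- Landau-type estimate for the second derivative from bounds on the first and third
derivatives. -/
lemma landau2 {g1 g2 g3 : ℝ → E} {T S G h : ℝ} (hh : 0 < h) (hhT : h ≤ T / 2)
    (hg1 : ∀ t ∈ Icc 0 T, HasDerivAt g1 (g2 t) t)
    (hg2 : ∀ t ∈ Icc 0 T, HasDerivAt g2 (g3 t) t)
    (hS : ∀ t ∈ Icc 0 T, ‖g1 t‖ ≤ S) (hG : ∀ t ∈ Icc 0 T, ‖g3 t‖ ≤ G) :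
    ∀ t ∈ Icc 0 T, ‖g2 t‖ ≤ 2 * S / h + G * h / 2 := by
  intro t ht
  have key : h * ‖g2 t‖ ≤ 2 * S + G * h ^ 2 / 2 := by
    rcases le_or_gt t (T / 2) with hcase | hcase
    · have hsub : Icc t (t + h) ⊆ Icc 0 T := Icc_subset_Icc ht.1 (by linarith [ht.1])
      have hZ := taylor2_right (a := t) (b := t + h) (G := G)
        (right_mem_Icc.2 (by linarith))
        (fun s hs => hg1 s (hsub hs)) (fun s hs => hg2 s (hsub hs))
        (fun s hs => hG s (hsub hs))
      rw [add_sub_cancel_left] at hZ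
      have key2 : h • g2 t = g1 (t + h) - g1 t - (g1 (t + h) - g1 t - h • g2 t) := by module
      have hn : ‖h • g2 t‖ ≤ S + S + G * h ^ 2 / 2 := by
        rw [key2]
        refine le_trans (norm_sub_le _ _) ?_
        refine add_le_add (le_trans (norm_sub_le _ _) ?_) hZ
        exact add_le_add (hS _ (hsub (right_mem_Icc.2 (by linarith)))) (hS t ht)
      rw [norm_smul, Real.norm_eq_abs, abs_of_pos hh] at hn
      nlinarith
    · have hsub : Icc (t - h) t ⊆ Icc 0 T := Icc_subset_Icc (by linarith) ht.2
      have hZ := taylor2_left (a := t - h) (b := t) (G := G) (by linarith)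
        (fun s hs => hg1 s (hsub hs)) (fun s hs => hg2 s (hsub hs))
        (fun s hs => hG s (hsub hs))
      rw [sub_sub_cancel] at hZ
      have key2 : h • g2 t = (g1 (t - h) - g1 t + h • g2 t) - g1 (t - h) + g1 t := by module
      have hn : ‖h • g2 t‖ ≤ G * h ^ 2 / 2 + S + S := by
        rw [key2]
        refine le_trans (norm_add_le _ _) ?_
        refine add_le_add (le_trans (norm_sub_le _ _) ?_) (hS t ht)
        exact add_le_add hZ (hS _ (hsub (left_mem_Icc.2 (by linarith))))
      rw [norm_smul, Real.norm_eq_abs, abs_of_pos hh] at hn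
      nlinarith
  have : ‖g2 t‖ ≤ (2 * S + G * h ^ 2 / 2) / h := by
    rw [le_div_iff₀ hh]; nlinarith [key]
  calc ‖g2 t‖ ≤ (2 * S + G * h ^ 2 / 2) / h := this
    _ = 2 * S / h + G * h / 2 := by field_simp

end AuxCalc


lemma op_app_le {X Y : Type*} [NormedAddCommGroup X] [NormedSpace ℝ X]
    [NormedAddCommGroup Y] [NormedSpace ℝ Y] (Φ : X →L[ℝ] Y) {b c : ℝ} {x : X}
    (hΦ : ‖Φ‖ ≤ b) (hx : ‖x‖ ≤ c) (hb : 0 ≤ b) : ‖Φ x‖ ≤ b * c :=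
  le_trans (Φ.le_opNorm x) (mul_le_mul hΦ hx (norm_nonneg _) hb)

set_option maxHeartbeats 2000000 in
lemma final_arith
    (B C h₁ h₂ EE ca c1 c2 c3 c4 cW1 cW2 K P F s1 s2 W GG Du Dv Su Sv Sdu Sdv : ℝ)
    (hB : 0 < B) (hC0 : 0 ≤ C)
    (hh₁pos : 0 < h₁) (hh₂pos : 0 < h₂) (hEE0 : 0 < EE)
    (hcadef : ca = B*C^3 + 3*B*C^2)
    (hc2def : c2 = 8/h₁ + 2*h₁^2*ca)
    (hc1def : c1 = c2 + B*C)
    (hc3def : c3 = B*C^2 + B*C)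
    (hc4def : c4 = (2/h₂)*c2 + (h₂/2)*(ca + B*C*c2))
    (hcW1def : cW1 = (c3/12 + C*c1/6)*EE)
    (hcW2def : cW2 = (c4/12 + C*c2/6)*EE)
    (hKdef : K = 1 + 2*cW1 + (C*B*(C*cW1) + C*B*cW2 + C*B*(C*c2)/6 + ca/12 + B*C*c2/12)
      + (C*B*cW1 + c3/12 + C*c3/6))
    (hP0 : 0 ≤ P) (hF0 : 0 ≤ F) (hs10 : 0 ≤ s1) (hs20 : 0 ≤ s2)
    (hGGeq : GG = B*C^3*P^3 + 3*B*C^2*(P*F) + B*C*s1)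
    (hs1b : s1 ≤ 8*F/h₁ + 2*h₁^2*(B*C^3*P^3 + 3*B*C^2*(P*F)))
    (hs1P : s1 ≤ B*C*P)
    (hs2a : s2 ≤ 2*s1/h₂ + GG*h₂/2)
    (hs2P : s2 ≤ B*C^2*P^2 + B*C*F)
    (hWdef : W = (s2/12 + C*s1/6)*EE)
    (hDudef : Du = C*(B*(C*P)*W + B*(W + (1/6)*(C*s1))) + (1/12)*GG)
    (hDvdef : Dv = (C*(B*W) + (1/12)*s2) + (1/6)*(C*s2))
    (hSu : Su ≤ W) (hSv : Sv ≤ W) (hSdu : Sdu ≤ Du) (hSdv : Sdv ≤ Dv) :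
    Su + Sv ≤ K*(P^2+F) ∧ Sdu ≤ K*(P^3+P*F+F) ∧ Sdv ≤ K*(P^2+F) := by
  have hBC0 : 0 ≤ B*C := mul_nonneg hB.le hC0
  have h8 : (0:ℝ) ≤ 8/h₁ := by positivity
  have hsq0 : (0:ℝ) ≤ h₁^2 := sq_nonneg _
  have hca : 0 ≤ ca := by rw [hcadef]; positivity
  have hc2 : 0 ≤ c2 := by rw [hc2def]; positivity
  have hc1 : 0 ≤ c1 := by rw [hc1def]; positivity
  have hc3 : 0 ≤ c3 := by rw [hc3def]; positivity
  have hc4 : 0 ≤ c4 := by rw [hc4def]; positivity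
  have hcW1 : 0 ≤ cW1 := by rw [hcW1def]; positivity
  have hcW2 : 0 ≤ cW2 := by rw [hcW2def]; positivity
  have hW0 : 0 ≤ W := by
    rw [hWdef]
    have : 0 ≤ C*s1 := mul_nonneg hC0 hs10
    positivity
  have t1 : 0 ≤ C*B*(C*cW1) := by positivity
  have t2 : 0 ≤ C*B*cW2 := by positivity
  have t3 : 0 ≤ C*B*(C*c2) := by positivity
  have t4 : 0 ≤ B*C*c2 := by positivity
  have t5 : 0 ≤ C*B*cW1 := by positivity
  have t6 : 0 ≤ C*c3 := by positivity
  have hK1 : 2*cW1 ≤ K := by rw [hKdef]; linarith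
  have hK2 : C*B*(C*cW1) + C*B*cW2 + C*B*(C*c2)/6 + ca/12 + B*C*c2/12 ≤ K := by
    rw [hKdef]; linarith
  have hK3 : C*B*cW1 + c3/12 + C*c3/6 ≤ K := by rw [hKdef]; linarith
  have hQ0 : 0 ≤ P^2 + F := by positivity
  have hR0 : 0 ≤ P^3 + P*F + F := by positivity
  have mca : B*C^3*P^3 + 3*B*C^2*(P*F) ≤ ca*(P^3 + P*F + F) := by
    have expand : ca*(P^3+P*F+F) = B*C^3*P^3 + 3*B*C^2*(P*F)
        + (B*C^3*(P*F) + B*C^3*F + 3*B*C^2*P^3 + 3*B*C^2*F) := by rw [hcadef]; ring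
    have n1 : 0 ≤ B*C^3*(P*F) :=
      mul_nonneg (mul_nonneg hB.le (pow_nonneg hC0 3)) (mul_nonneg hP0 hF0)
    have n2 : 0 ≤ B*C^3*F := mul_nonneg (mul_nonneg hB.le (pow_nonneg hC0 3)) hF0
    have n3 : 0 ≤ B*C^2*P^3 := mul_nonneg (mul_nonneg hB.le (pow_nonneg hC0 2)) (pow_nonneg hP0 3)
    have n4 : 0 ≤ B*C^2*F := mul_nonneg (mul_nonneg hB.le (pow_nonneg hC0 2)) hF0
    linarith
  have hs1R : s1 ≤ c2*(P^3 + P*F + F) := by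
    have e8 : 8*F/h₁ = (8/h₁)*F := by ring
    have m1 : (8/h₁)*F ≤ (8/h₁)*(P^3+P*F+F) :=
      mul_le_mul_of_nonneg_left
        (by linarith [pow_nonneg hP0 3, mul_nonneg hP0 hF0]) h8
    have m3 : 2*h₁^2*(B*C^3*P^3+3*B*C^2*(P*F)) ≤ 2*h₁^2*(ca*(P^3+P*F+F)) :=
      mul_le_mul_of_nonneg_left mca (by linarith)
    have expand2 : (8/h₁ + 2*h₁^2*ca)*(P^3+P*F+F)
        = (8/h₁)*(P^3+P*F+F) + 2*h₁^2*(ca*(P^3+P*F+F)) := by ring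
    rw [hc2def]
    linarith [hs1b]
  have hGGR : GG ≤ (ca + B*C*c2)*(P^3 + P*F + F) := by
    have m4 : B*C*s1 ≤ B*C*(c2*(P^3+P*F+F)) := mul_le_mul_of_nonneg_left hs1R hBC0
    have expand3 : (ca + B*C*c2)*(P^3+P*F+F)
        = ca*(P^3+P*F+F) + B*C*(c2*(P^3+P*F+F)) := by ring
    rw [hGGeq]
    linarith [mca]
  have hs1Q : s1 ≤ c1*(P^2 + F) := by
    rcases le_total P 1 with hP1 | hP1
    · have eP3 : P^3 ≤ P^2 := by
        have h := mul_nonneg (pow_nonneg hP0 2) (sub_nonneg.2 hP1)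
        have e : P^2*(1-P) = P^2 - P^3 := by ring
        linarith
      have ePF : P*F ≤ F := by
        have h := mul_nonneg hF0 (sub_nonneg.2 hP1)
        have e : F*(1-P) = F - P*F := by ring
        linarith
      have m1 : B*C^3*P^3 + 3*B*C^2*(P*F) ≤ ca*(P^2+F) := by
        have expand : ca*(P^2+F) = B*C^3*P^2 + B*C^3*F + 3*B*C^2*P^2 + 3*B*C^2*F := by
          rw [hcadef]; ring
        have a1 : B*C^3*P^3 ≤ B*C^3*P^2 :=
          mul_le_mul_of_nonneg_left eP3 (mul_nonneg hB.le (pow_nonneg hC0 3))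
        have a2 : B*C^2*(P*F) ≤ B*C^2*F :=
          mul_le_mul_of_nonneg_left ePF (mul_nonneg hB.le (pow_nonneg hC0 2))
        have n2 : 0 ≤ B*C^3*F := mul_nonneg (mul_nonneg hB.le (pow_nonneg hC0 3)) hF0
        have n3 : 0 ≤ B*C^2*P^2 :=
          mul_nonneg (mul_nonneg hB.le (pow_nonneg hC0 2)) (pow_nonneg hP0 2)
        linarith
      have m2 : 2*h₁^2*(B*C^3*P^3+3*B*C^2*(P*F)) ≤ 2*h₁^2*(ca*(P^2+F)) :=
        mul_le_mul_of_nonneg_left m1 (by linarith)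
      have e8 : 8*F/h₁ = (8/h₁)*F := by ring
      have m5 : (8/h₁)*F ≤ (8/h₁)*(P^2+F) :=
        mul_le_mul_of_nonneg_left (by linarith [pow_nonneg hP0 2]) h8
      have m6 : 0 ≤ B*C*(P^2+F) := mul_nonneg hBC0 hQ0
      have expand2 : (8/h₁ + 2*h₁^2*ca + B*C)*(P^2+F)
          = (8/h₁)*(P^2+F) + 2*h₁^2*(ca*(P^2+F)) + B*C*(P^2+F) := by ring
      rw [hc1def, hc2def]
      linarith [hs1b]
    · have eP2 : P ≤ P^2 := by
        have h := mul_nonneg hP0 (sub_nonneg.2 hP1)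
        have e : P*(P-1) = P^2 - P := by ring
        linarith
      have a1 : B*C*P ≤ B*C*P^2 := mul_le_mul_of_nonneg_left eP2 hBC0
      have a2 : B*C*P^2 ≤ c1*(P^2+F) := by
        have b2 : B*C*(P^2+F) ≤ c1*(P^2+F) := by
          refine mul_le_mul_of_nonneg_right ?_ hQ0
          rw [hc1def]; linarith
        have b3 : 0 ≤ B*C*F := mul_nonneg hBC0 hF0
        have b4 : B*C*(P^2+F) = B*C*P^2 + B*C*F := by ring
        linarith
      linarith [hs1P]
  have hs2Q : s2 ≤ c3*(P^2 + F) := by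
    have expand : c3*(P^2+F) = B*C^2*P^2 + B*C^2*F + B*C*P^2 + B*C*F := by rw [hc3def]; ring
    have b1 : 0 ≤ B*C*P^2 := mul_nonneg hBC0 (pow_nonneg hP0 2)
    have b2 : 0 ≤ B*C^2*F := mul_nonneg (mul_nonneg hB.le (pow_nonneg hC0 2)) hF0
    linarith [hs2P]
  have hs2R : s2 ≤ c4*(P^3 + P*F + F) := by
    have h2h : (0:ℝ) ≤ 2/h₂ := by positivity
    have e1 : 2*s1/h₂ = (2/h₂)*s1 := by ring
    have m1 : (2/h₂)*s1 ≤ (2/h₂)*(c2*(P^3+P*F+F)) := mul_le_mul_of_nonneg_left hs1R h2h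
    have m2 : GG*h₂/2 = (h₂/2)*GG := by ring
    have m3 : (h₂/2)*GG ≤ (h₂/2)*((ca + B*C*c2)*(P^3+P*F+F)) :=
      mul_le_mul_of_nonneg_left hGGR (by linarith)
    have expand2 : ((2/h₂)*c2 + (h₂/2)*(ca + B*C*c2))*(P^3+P*F+F)
        = (2/h₂)*(c2*(P^3+P*F+F)) + (h₂/2)*((ca + B*C*c2)*(P^3+P*F+F)) := by ring
    rw [hc4def]
    linarith [hs2a]
  have hWQ : W ≤ cW1*(P^2 + F) := by
    have hCs1 : C*s1 ≤ C*(c1*(P^2+F)) := mul_le_mul_of_nonneg_left hs1Q hC0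
    have hin : s2/12 + C*s1/6 ≤ c3*(P^2+F)/12 + C*(c1*(P^2+F))/6 := by linarith [hs2Q]
    have h := mul_le_mul_of_nonneg_right hin hEE0.le
    rw [hWdef, hcW1def]
    calc (s2/12 + C*s1/6)*EE ≤ (c3*(P^2+F)/12 + C*(c1*(P^2+F))/6)*EE := h
      _ = (c3/12 + C*c1/6)*EE*(P^2+F) := by ring
  have hWR : W ≤ cW2*(P^3 + P*F + F) := by
    have hCs1 : C*s1 ≤ C*(c2*(P^3+P*F+F)) := mul_le_mul_of_nonneg_left hs1R hC0
    have hin : s2/12 + C*s1/6 ≤ c4*(P^3+P*F+F)/12 + C*(c2*(P^3+P*F+F))/6 := by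
      linarith [hs2R]
    have h := mul_le_mul_of_nonneg_right hin hEE0.le
    rw [hWdef, hcW2def]
    calc (s2/12 + C*s1/6)*EE ≤ (c4*(P^3+P*F+F)/12 + C*(c2*(P^3+P*F+F))/6)*EE := h
      _ = (c4/12 + C*c2/6)*EE*(P^3+P*F+F) := by ring
  refine ⟨?_, ?_, ?_⟩
  · have h2W : 2*cW1*(P^2+F) ≤ K*(P^2+F) := mul_le_mul_of_nonneg_right hK1 hQ0
    calc Su + Sv ≤ 2*W := by linarith
      _ ≤ 2*(cW1*(P^2+F)) := by linarith
      _ = 2*cW1*(P^2+F) := by ring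
      _ ≤ K*(P^2+F) := h2W
  · have hPW : P*W ≤ cW1*(P^3+P*F) := by
      have a1 : P*W ≤ P*(cW1*(P^2+F)) := mul_le_mul_of_nonneg_left hWQ hP0
      have a2 : P*(cW1*(P^2+F)) = cW1*(P^3+P*F) := by ring
      linarith
    have hPWR : P*W ≤ cW1*(P^3+P*F+F) := by
      have : cW1*(P^3+P*F) ≤ cW1*(P^3+P*F+F) :=
        mul_le_mul_of_nonneg_left (by linarith) hcW1
      linarith
    have hDu2 : Du = C*B*C*(P*W) + C*B*W + C*B*C*s1/6 + GG/12 := by rw [hDudef]; ring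
    have b1 : C*B*C*(P*W) ≤ C*B*C*(cW1*(P^3+P*F+F)) :=
      mul_le_mul_of_nonneg_left hPWR (by positivity)
    have b2 : C*B*W ≤ C*B*(cW2*(P^3+P*F+F)) :=
      mul_le_mul_of_nonneg_left hWR (by positivity)
    have b3 : C*B*C*s1 ≤ C*B*C*(c2*(P^3+P*F+F)) :=
      mul_le_mul_of_nonneg_left hs1R (by positivity)
    have expand : (C*B*(C*cW1) + C*B*cW2 + C*B*(C*c2)/6 + ca/12 + B*C*c2/12)*(P^3+P*F+F)
        = C*B*C*(cW1*(P^3+P*F+F)) + C*B*(cW2*(P^3+P*F+F))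
          + C*B*C*(c2*(P^3+P*F+F))/6 + ((ca + B*C*c2)*(P^3+P*F+F))/12 := by ring
    have hDuK : Du ≤ (C*B*(C*cW1) + C*B*cW2 + C*B*(C*c2)/6 + ca/12 + B*C*c2/12)
        *(P^3+P*F+F) := by
      rw [hDu2, expand]
      linarith [hGGR]
    have hfin : (C*B*(C*cW1) + C*B*cW2 + C*B*(C*c2)/6 + ca/12 + B*C*c2/12)*(P^3+P*F+F)
        ≤ K*(P^3+P*F+F) := mul_le_mul_of_nonneg_right hK2 hR0
    linarith
  · have b1 : C*B*W ≤ C*B*(cW1*(P^2+F)) := mul_le_mul_of_nonneg_left hWQ (by positivity)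
    have expand : (C*B*cW1 + c3/12 + C*c3/6)*(P^2+F)
        = C*B*(cW1*(P^2+F)) + c3*(P^2+F)/12 + C*(c3*(P^2+F))/6 := by ring
    have b2 : C*s2 ≤ C*(c3*(P^2+F)) := mul_le_mul_of_nonneg_left hs2Q hC0
    have hDvK : Dv ≤ (C*B*cW1 + c3/12 + C*c3/6)*(P^2+F) := by
      rw [hDvdef, expand]
      have e : C*(B*W) = C*B*W := by ring
      linarith [hs2Q]
    have hfin : (C*B*cW1 + c3/12 + C*c3/6)*(P^2+F) ≤ K*(P^2+F) :=
      mul_le_mul_of_nonneg_right hK3 hQ0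
    linarith

set_option maxHeartbeats 1000000 in
/-- bounds `eqn:uvmaxbd`, `eqn:nv1`, `eqn:nv2` on the solution
of the variational system. There is `K` depending only on `B`, `T`, `‖M‖`,
`‖M⁻¹‖` such that for every initial condition,
`‖u‖_∞ + ‖v‖_∞ ≤ K(‖p‖_∞² + ‖f(q)‖_∞)`,
`‖ü‖_∞ ≤ K(‖p‖_∞³ + ‖p‖_∞‖f(q)‖_∞ + ‖f(q)‖_∞)` and
`‖v̈‖_∞ ≤ K(‖p‖_∞² + ‖f(q)‖_∞)`. -/
theorem stmt_16 (m : ℕ) (hm : 0 < m) (T B : ℝ) (hT : 0 < T) (hB : 0 < B)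
    (M : Matrix (Fin m) (Fin m) ℝ) (hM : M.PosDef) :
    ∃ K : ℝ, 0 < K ∧
      ∀ (V : (Fin m → ℝ) → ℝ) (f : (Fin m → ℝ) → (Fin m → ℝ)),
        ContDiff ℝ 4 V → (∀ q, 0 ≤ V q) →
        (∀ q w, f q ⬝ᵥ w = -(fderiv ℝ V q) w) →
        (∀ q, ‖fderiv ℝ f q‖ ≤ B) →
        (∀ q, ‖fderiv ℝ (fderiv ℝ f) q‖ ≤ B) →
        (∀ q, @norm _ ContinuousLinearMap.hasOpNorm (fderiv ℝ (fderiv ℝ (fderiv ℝ f)) q) ≤ B) →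
        ∀ (qt pt u v ddu ddv : ℝ → (Fin m → ℝ)),
        (∀ t ∈ Set.Icc (0:ℝ) T, HasDerivAt qt (M⁻¹.mulVec (pt t)) t) →
        (∀ t ∈ Set.Icc (0:ℝ) T, HasDerivAt pt (f (qt t)) t) →
        u 0 = 0 → v 0 = 0 →
        -- first derivatives of `u`, `v` (the variational system)
        (∀ t ∈ Set.Icc (0:ℝ) T, HasDerivAt u
          (M⁻¹.mulVec ((fderiv ℝ f (qt t)) (v t)) +
            (1/12 : ℝ) • dddp m M⁻¹ f qt pt t) t) →
        (∀ t ∈ Set.Icc (0:ℝ) T, HasDerivAt v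
          (u t - (1/6 : ℝ) • dddq m M⁻¹ f qt pt t) t) →
        -- `ddu = ü`, `ddv = v̈`: derivatives of the right-hand sides above
        (∀ t ∈ Set.Icc (0:ℝ) T, HasDerivAt
          (fun s => M⁻¹.mulVec ((fderiv ℝ f (qt s)) (v s)) +
            (1/12 : ℝ) • dddp m M⁻¹ f qt pt s) (ddu t) t) →
        (∀ t ∈ Set.Icc (0:ℝ) T, HasDerivAt
          (fun s => u s - (1/6 : ℝ) • dddq m M⁻¹ f qt pt s) (ddv t) t) →
        supIcc m T u + supIcc m T v ≤
          K * (supIcc m T pt ^ 2 + supIcc m T (fun t => f (qt t))) ∧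
        supIcc m T ddu ≤
          K * (supIcc m T pt ^ 3 +
            supIcc m T pt * supIcc m T (fun t => f (qt t)) +
            supIcc m T (fun t => f (qt t))) ∧
        supIcc m T ddv ≤
          K * (supIcc m T pt ^ 2 + supIcc m T (fun t => f (qt t))) := by
  classical
  have hT0 : (0:ℝ) ≤ T := hT.le
  -- `M⁻¹` as a continuous linear map, and its operator norm `C`
  obtain ⟨Lc, hLcdef⟩ : ∃ L : (Fin m → ℝ) →L[ℝ] (Fin m → ℝ),
      L = LinearMap.toContinuousLinearMap (Matrix.mulVecLin M⁻¹) := ⟨_, rfl⟩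
  obtain ⟨C, hCdef⟩ : ∃ x : ℝ, x = ‖Lc‖ := ⟨_, rfl⟩
  have hLc : ∀ x, M⁻¹.mulVec x = Lc x := by
    intro x; rw [hLcdef]; simp [Matrix.mulVecLin_apply]
  have hC0 : 0 ≤ C := hCdef ▸ norm_nonneg _
  have hCb : ∀ x : Fin m → ℝ, ‖M⁻¹.mulVec x‖ ≤ C * ‖x‖ := by
    intro x; rw [hLc, hCdef]; exact Lc.le_opNorm x
  -- step sizes for the Landau-type estimates
  obtain ⟨h₁, hh₁def⟩ : ∃ x : ℝ, x = min (T/4) (1/(Real.sqrt (2*B*C) + 1)) := ⟨_, rfl⟩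
  obtain ⟨h₂, hh₂def⟩ : ∃ x : ℝ, x = T/2 := ⟨_, rfl⟩
  have hsn := Real.sqrt_nonneg (2*B*C)
  have hh₁pos : 0 < h₁ := by
    rw [hh₁def]
    exact lt_min (by linarith) (by positivity)
  have hh₁T : h₁ ≤ T/4 := by rw [hh₁def]; exact min_le_left _ _
  have hh₂pos : 0 < h₂ := by rw [hh₂def]; linarith
  have hh₂T : h₂ ≤ T/2 := le_of_eq hh₂def
  have hh₁sq : h₁^2 * (B*C) ≤ 1/2 := by
    have h2d : (0:ℝ) ≤ 2*B*C := mul_nonneg (by linarith) hC0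
    have hs := Real.sq_sqrt h2d
    have hle : h₁ ≤ 1/(Real.sqrt (2*B*C) + 1) := by
      rw [hh₁def]; exact min_le_right _ _
    have h1 : h₁ * (Real.sqrt (2*B*C) + 1) ≤ 1 := by
      rw [← le_div_iff₀ (by positivity)]; exact hle
    have h1sq : (h₁ * (Real.sqrt (2*B*C) + 1))^2 ≤ 1 := by
      nlinarith [mul_nonneg hh₁pos.le (by positivity : (0:ℝ) ≤ Real.sqrt (2*B*C) + 1)]
    rw [mul_pow] at h1sq
    have hsq0 : (0:ℝ) ≤ h₁^2 := sq_nonneg _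
    nlinarith [mul_nonneg hsq0 hsn]
  -- global constants
  have hBC0 : (0:ℝ) ≤ B*C := mul_nonneg hB.le hC0
  obtain ⟨Kg, hKgdef⟩ : ∃ x : ℝ, x = C*B + 1 := ⟨_, rfl⟩
  have hKg1 : 1 ≤ Kg := by rw [hKgdef]; nlinarith
  obtain ⟨EE, hEEdef⟩ : ∃ x : ℝ, x = Real.exp (Kg*T) := ⟨_, rfl⟩
  have hEE1 : 1 ≤ EE := by
    rw [hEEdef]; exact Real.one_le_exp (mul_nonneg (by linarith) hT0)
  have hEE0 : 0 < EE := by rw [hEEdef]; exact Real.exp_pos _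
  obtain ⟨ca, hcadef⟩ : ∃ x : ℝ, x = B*C^3 + 3*B*C^2 := ⟨_, rfl⟩
  have hca : 0 ≤ ca := by
    rw [hcadef]
    have e1 : 0 ≤ B*C^3 := mul_nonneg hB.le (pow_nonneg hC0 3)
    have e2 : 0 ≤ B*C^2 := mul_nonneg hB.le (pow_nonneg hC0 2)
    linarith
  have h8 : (0:ℝ) ≤ 8/h₁ := div_nonneg (by norm_num) hh₁pos.le
  have hsq0 : (0:ℝ) ≤ h₁^2 := sq_nonneg _
  obtain ⟨c2, hc2def⟩ : ∃ x : ℝ, x = 8/h₁ + 2*h₁^2*ca := ⟨_, rfl⟩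
  have hc2 : 0 ≤ c2 := by
    rw [hc2def]
    have := mul_nonneg (mul_nonneg (by norm_num : (0:ℝ) ≤ 2) hsq0) hca
    linarith
  obtain ⟨c1, hc1def⟩ : ∃ x : ℝ, x = c2 + B*C := ⟨_, rfl⟩
  have hc1 : 0 ≤ c1 := by rw [hc1def]; linarith
  obtain ⟨c3, hc3def⟩ : ∃ x : ℝ, x = B*C^2 + B*C := ⟨_, rfl⟩
  have hc3 : 0 ≤ c3 := by
    rw [hc3def]
    have e2 : 0 ≤ B*C^2 := mul_nonneg hB.le (pow_nonneg hC0 2)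
    linarith
  obtain ⟨c4, hc4def⟩ : ∃ x : ℝ, x = (2/h₂)*c2 + (h₂/2)*(ca + B*C*c2) := ⟨_, rfl⟩
  have hc4 : 0 ≤ c4 := by
    rw [hc4def]
    have h2h : (0:ℝ) ≤ 2/h₂ := div_nonneg (by norm_num) hh₂pos.le
    have e1 : 0 ≤ (2/h₂)*c2 := mul_nonneg h2h hc2
    have e2 : 0 ≤ (h₂/2)*(ca + B*C*c2) :=
      mul_nonneg (by linarith) (add_nonneg hca (mul_nonneg hBC0 hc2))
    linarith
  obtain ⟨cW1, hcW1def⟩ : ∃ x : ℝ, x = (c3/12 + C*c1/6)*EE := ⟨_, rfl⟩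
  have hcW1 : 0 ≤ cW1 := by
    rw [hcW1def]
    exact mul_nonneg (add_nonneg (by linarith) (by nlinarith [mul_nonneg hC0 hc1])) hEE0.le
  obtain ⟨cW2, hcW2def⟩ : ∃ x : ℝ, x = (c4/12 + C*c2/6)*EE := ⟨_, rfl⟩
  have hcW2 : 0 ≤ cW2 := by
    rw [hcW2def]
    exact mul_nonneg (add_nonneg (by linarith) (by nlinarith [mul_nonneg hC0 hc2])) hEE0.le
  obtain ⟨K, hKdef⟩ : ∃ x : ℝ, x = 1 + 2*cW1 + (C*B*(C*cW1) + C*B*cW2 + C*B*(C*c2)/6 + ca/12 + B*C*c2/12)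
      + (C*B*cW1 + c3/12 + C*c3/6) := ⟨_, rfl⟩
  have t1 : 0 ≤ C*B*(C*cW1) := mul_nonneg (mul_nonneg hC0 hB.le) (mul_nonneg hC0 hcW1)
  have t2 : 0 ≤ C*B*cW2 := mul_nonneg (mul_nonneg hC0 hB.le) hcW2
  have t3 : 0 ≤ C*B*(C*c2) := mul_nonneg (mul_nonneg hC0 hB.le) (mul_nonneg hC0 hc2)
  have t4 : 0 ≤ B*C*c2 := mul_nonneg hBC0 hc2
  have t5 : 0 ≤ C*B*cW1 := mul_nonneg (mul_nonneg hC0 hB.le) hcW1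
  have t6 : 0 ≤ C*c3 := mul_nonneg hC0 hc3
  have hK1 : 2*cW1 ≤ K := by rw [hKdef]; linarith
  have hK2 : C*B*(C*cW1) + C*B*cW2 + C*B*(C*c2)/6 + ca/12 + B*C*c2/12 ≤ K := by
    rw [hKdef]; linarith
  have hK3 : C*B*cW1 + c3/12 + C*c3/6 ≤ K := by rw [hKdef]; linarith
  have hKpos : 0 < K := by rw [hKdef]; linarith
  refine ⟨K, hKpos, ?_⟩
  intro V f hV hV0 hfV hB1 hB2 hB3 qt pt u v ddu ddv hq hp hu0 hv0 hu hv hddu hddv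
  -- `f` is three times continuously differentiable
  have hfeq : f = fun q i => -((fderiv ℝ V q) (Pi.single i 1)) := by
    funext q i
    have h := hfV q (Pi.single i 1)
    rwa [dotProduct_single, mul_one] at h
  have hf3 : ContDiff ℝ 3 f := by
    rw [hfeq]
    exact contDiff_pi.2 fun i =>
      ((hV.fderiv_right (by norm_num)).clm_apply contDiff_const).neg
  have hfd : Differentiable ℝ f := hf3.differentiable (by norm_num)
  have hf1c : ContDiff ℝ 2 (fderiv ℝ f) := hf3.fderiv_right (by norm_num)
  have hf1d : Differentiable ℝ (fderiv ℝ f) := hf1c.differentiable (by norm_num)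
  have hf2c : ContDiff ℝ 1 (fderiv ℝ (fderiv ℝ f)) := hf1c.fderiv_right (by norm_num)
  have hf2d : Differentiable ℝ (fderiv ℝ (fderiv ℝ f)) := hf2c.differentiable (by norm_num)
  -- derivative helper for `M⁻¹.mulVec`
  have hLd : ∀ {c : ℝ → Fin m → ℝ} {c' : Fin m → ℝ} {t : ℝ}, HasDerivAt c c' t →
      HasDerivAt (fun s => M⁻¹.mulVec (c s)) (M⁻¹.mulVec c') t := by
    intro c c' t hc
    have h := Lc.hasFDerivAt.comp_hasDerivAt t hc
    simp only [Function.comp_def, ← hLc] at h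
    exact h
  -- the successive time derivatives of `f (qt ·)`
  set d1 : ℝ → Fin m → ℝ := fun s => (fderiv ℝ f (qt s)) (M⁻¹.mulVec (pt s)) with hd1def
  set d2 : ℝ → Fin m → ℝ := fun s => dddp m M⁻¹ f qt pt s with hd2def
  set d3 : ℝ → Fin m → ℝ := fun t =>
    ((fderiv ℝ (fderiv ℝ (fderiv ℝ f)) (qt t) (M⁻¹.mulVec (pt t))) (M⁻¹.mulVec (pt t)) +
        fderiv ℝ (fderiv ℝ f) (qt t) (M⁻¹.mulVec (f (qt t)))) (M⁻¹.mulVec (pt t)) +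
      fderiv ℝ (fderiv ℝ f) (qt t) (M⁻¹.mulVec (pt t)) (M⁻¹.mulVec (f (qt t))) +
      (fderiv ℝ (fderiv ℝ f) (qt t) (M⁻¹.mulVec (pt t)) (M⁻¹.mulVec (f (qt t))) +
        fderiv ℝ f (qt t) (M⁻¹.mulVec (d1 t))) with hd3def
  have hdq : ∀ t, dddq m M⁻¹ f qt pt t = M⁻¹.mulVec (d1 t) := by
    intro t; simp [dddq, hd1def]
  have hdp : ∀ t, dddp m M⁻¹ f qt pt t = d2 t := by
    intro t; simp [hd2def]
  have hgder : ∀ t ∈ Icc (0:ℝ) T, HasDerivAt (fun s => f (qt s)) (d1 t) t := by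
    intro t ht
    exact (hfd (qt t)).hasFDerivAt.comp_hasDerivAt t (hq t ht)
  have hfqder : ∀ t ∈ Icc (0:ℝ) T, HasDerivAt (fun s => fderiv ℝ f (qt s))
      ((fderiv ℝ (fderiv ℝ f) (qt t)) (M⁻¹.mulVec (pt t))) t := by
    intro t ht
    exact (hf1d (qt t)).hasFDerivAt.comp_hasDerivAt t (hq t ht)
  have hwder : ∀ t ∈ Icc (0:ℝ) T, HasDerivAt (fun s => M⁻¹.mulVec (pt s))
      (M⁻¹.mulVec (f (qt t))) t := fun t ht => hLd (hp t ht)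
  have hwgder : ∀ t ∈ Icc (0:ℝ) T, HasDerivAt (fun s => M⁻¹.mulVec (f (qt s)))
      (M⁻¹.mulVec (d1 t)) t := fun t ht => hLd (hgder t ht)
  have hd1der : ∀ t ∈ Icc (0:ℝ) T, HasDerivAt d1 (d2 t) t := by
    intro t ht
    have h := (hfqder t ht).clm_apply (hwder t ht)
    rw [hd1def, hd2def]
    exact h
  have hd2der : ∀ t ∈ Icc (0:ℝ) T, HasDerivAt d2 (d3 t) t := by
    intro t ht
    have hf2qder : HasDerivAt (fun s => fderiv ℝ (fderiv ℝ f) (qt s))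
        ((fderiv ℝ (fderiv ℝ (fderiv ℝ f)) (qt t)) (M⁻¹.mulVec (pt t))) t :=
      HasFDerivAt.comp_hasDerivAt (l := fderiv ℝ (fderiv ℝ f)) t (hf2d (qt t)).hasFDerivAt (hq t ht)
    have hA1 := hf2qder.clm_apply (hwder t ht)
    have hterm1 := hA1.clm_apply (hwder t ht)
    have hterm2 := (hfqder t ht).clm_apply (hwgder t ht)
    have h := hterm1.add hterm2
    rw [hd2def, hd3def]
    simp only [dddp]
    exact h
  -- continuity on `[0, T]`
  have hptc : ContinuousOn pt (Icc (0:ℝ) T) :=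
    fun t ht => (hp t ht).continuousAt.continuousWithinAt
  have hgc : ContinuousOn (fun t => f (qt t)) (Icc (0:ℝ) T) :=
    fun t ht => (hgder t ht).continuousAt.continuousWithinAt
  have hd1c : ContinuousOn d1 (Icc (0:ℝ) T) :=
    fun t ht => (hd1der t ht).continuousAt.continuousWithinAt
  have hd2c : ContinuousOn d2 (Icc (0:ℝ) T) :=
    fun t ht => (hd2der t ht).continuousAt.continuousWithinAt
  -- sup norms
  obtain ⟨P, hPdef⟩ : ∃ x : ℝ, x = supIcc m T pt := ⟨_, rfl⟩
  obtain ⟨F, hFdef⟩ : ∃ x : ℝ, x = supIcc m T (fun t => f (qt t)) := ⟨_, rfl⟩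
  obtain ⟨s1, hs1def⟩ : ∃ x : ℝ, x = supIcc m T d1 := ⟨_, rfl⟩
  obtain ⟨s2, hs2def⟩ : ∃ x : ℝ, x = supIcc m T d2 := ⟨_, rfl⟩
  rw [← hPdef, ← hFdef]
  have hP0 : 0 ≤ P := by rw [hPdef]; exact supIcc_nonneg _ _ _
  have hF0 : 0 ≤ F := by rw [hFdef]; exact supIcc_nonneg _ _ _
  have hs10 : 0 ≤ s1 := by rw [hs1def]; exact supIcc_nonneg _ _ _
  have hs20 : 0 ≤ s2 := by rw [hs2def]; exact supIcc_nonneg _ _ _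
  have hPt : ∀ t ∈ Icc (0:ℝ) T, ‖pt t‖ ≤ P := fun t ht => by
    rw [hPdef]; exact le_supIcc hptc ht
  have hFt : ∀ t ∈ Icc (0:ℝ) T, ‖f (qt t)‖ ≤ F := fun t ht => by
    rw [hFdef]; exact le_supIcc hgc ht
  have hs1t : ∀ t ∈ Icc (0:ℝ) T, ‖d1 t‖ ≤ s1 := fun t ht => by
    rw [hs1def]; exact le_supIcc hd1c ht
  have hs2t : ∀ t ∈ Icc (0:ℝ) T, ‖d2 t‖ ≤ s2 := fun t ht => by
    rw [hs2def]; exact le_supIcc hd2c ht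
  have hLpb : ∀ t ∈ Icc (0:ℝ) T, ‖M⁻¹.mulVec (pt t)‖ ≤ C*P :=
    fun t ht => (hCb _).trans (mul_le_mul_of_nonneg_left (hPt t ht) hC0)
  have hLgb : ∀ t ∈ Icc (0:ℝ) T, ‖M⁻¹.mulVec (f (qt t))‖ ≤ C*F :=
    fun t ht => (hCb _).trans (mul_le_mul_of_nonneg_left (hFt t ht) hC0)
  have hLd1b : ∀ t ∈ Icc (0:ℝ) T, ‖M⁻¹.mulVec (d1 t)‖ ≤ C*s1 :=
    fun t ht => (hCb _).trans (mul_le_mul_of_nonneg_left (hs1t t ht) hC0)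
  have hLd2b : ∀ t ∈ Icc (0:ℝ) T, ‖M⁻¹.mulVec (d2 t)‖ ≤ C*s2 :=
    fun t ht => (hCb _).trans (mul_le_mul_of_nonneg_left (hs2t t ht) hC0)
  have hCP0 : 0 ≤ C*P := mul_nonneg hC0 hP0
  have hCF0 : 0 ≤ C*F := mul_nonneg hC0 hF0
  have hBCP0 : 0 ≤ B*(C*P) := mul_nonneg hB.le hCP0
  -- the bound `GG` on the third derivative `d3`
  obtain ⟨GG, hGGdef⟩ : ∃ x : ℝ, x = (B*(C*P)*(C*P) + B*(C*F))*(C*P) + B*(C*P)*(C*F)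
      + (B*(C*P)*(C*F) + B*(C*s1)) := ⟨_, rfl⟩
  have hGGeq : GG = B*C^3*P^3 + 3*B*C^2*(P*F) + B*C*s1 := by rw [hGGdef]; ring
  have hd3bd : ∀ t ∈ Icc (0:ℝ) T, ‖d3 t‖ ≤ GG := by
    intro t ht
    rw [hd3def, hGGdef]
    have e1 : ‖(fderiv ℝ (fderiv ℝ (fderiv ℝ f)) (qt t) (M⁻¹.mulVec (pt t)))
        (M⁻¹.mulVec (pt t))‖ ≤ B*(C*P)*(C*P) :=
      op_app_le _ (op_app_le _ (hB3 _) (hLpb t ht) hB.le) (hLpb t ht) hBCP0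
    have e2 : ‖fderiv ℝ (fderiv ℝ f) (qt t) (M⁻¹.mulVec (f (qt t)))‖ ≤ B*(C*F) :=
      op_app_le _ (hB2 _) (hLgb t ht) hB.le
    have e3 : ‖(fderiv ℝ (fderiv ℝ (fderiv ℝ f)) (qt t) (M⁻¹.mulVec (pt t)))
          (M⁻¹.mulVec (pt t)) + fderiv ℝ (fderiv ℝ f) (qt t) (M⁻¹.mulVec (f (qt t)))‖
        ≤ B*(C*P)*(C*P) + B*(C*F) := le_trans (norm_add_le _ _) (add_le_add e1 e2)
    have e4 : ‖((fderiv ℝ (fderiv ℝ (fderiv ℝ f)) (qt t) (M⁻¹.mulVec (pt t)))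
          (M⁻¹.mulVec (pt t)) + fderiv ℝ (fderiv ℝ f) (qt t) (M⁻¹.mulVec (f (qt t))))
          (M⁻¹.mulVec (pt t))‖ ≤ (B*(C*P)*(C*P) + B*(C*F))*(C*P) := by
      refine op_app_le _ e3 (hLpb t ht) ?_
      have : 0 ≤ B*(C*P)*(C*P) := mul_nonneg hBCP0 hCP0
      have : 0 ≤ B*(C*F) := mul_nonneg hB.le hCF0
      linarith
    have e5 : ‖fderiv ℝ (fderiv ℝ f) (qt t) (M⁻¹.mulVec (pt t)) (M⁻¹.mulVec (f (qt t)))‖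
        ≤ B*(C*P)*(C*F) :=
      op_app_le _ (op_app_le _ (hB2 _) (hLpb t ht) hB.le) (hLgb t ht) hBCP0
    have e6 : ‖fderiv ℝ f (qt t) (M⁻¹.mulVec (d1 t))‖ ≤ B*(C*s1) :=
      op_app_le _ (hB1 _) (hLd1b t ht) hB.le
    calc ‖_ + _ + _‖ ≤ ‖_ + _‖ + ‖_‖ := norm_add_le _ _
      _ ≤ (‖_‖ + ‖_‖) + ‖_‖ := by gcongr <;> exact norm_add_le _ _
      _ ≤ ((B*(C*P)*(C*P) + B*(C*F))*(C*P) + B*(C*P)*(C*F))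
          + (B*(C*P)*(C*F) + B*(C*s1)) := by
        gcongr
        exact le_trans (norm_add_le _ _) (add_le_add e5 e6)
      _ = _ := by ring
  -- Landau-type bounds on `s1` and `s2`
  have hGG0 : 0 ≤ GG := by
    rw [hGGeq]
    have e1 : 0 ≤ B*C^3*P^3 := mul_nonneg (mul_nonneg hB.le (pow_nonneg hC0 3)) (pow_nonneg hP0 3)
    have e2 : 0 ≤ B*C^2*(P*F) := mul_nonneg (mul_nonneg hB.le (pow_nonneg hC0 2)) (mul_nonneg hP0 hF0)
    have e3 : 0 ≤ B*C*s1 := mul_nonneg hBC0 hs10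
    linarith
  have hs1a : s1 ≤ 4*F/h₁ + GG*h₁^2 := by
    rw [hs1def]
    exact supIcc_le hT0 (landau1 hh₁pos hh₁T hgder hd1der hd2der hFt hd3bd)
  have hs1b : s1 ≤ 8*F/h₁ + 2*h₁^2*(B*C^3*P^3 + 3*B*C^2*(P*F)) := by
    have habs : h₁^2*(B*C)*s1 ≤ (1/2)*s1 := mul_le_mul_of_nonneg_right hh₁sq hs10
    rw [hGGeq] at hs1a
    have expand : (B*C^3*P^3 + 3*B*C^2*(P*F) + B*C*s1)*h₁^2
        = (B*C^3*P^3 + 3*B*C^2*(P*F))*h₁^2 + h₁^2*(B*C)*s1 := by ring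
    have e8 : 8*F/h₁ = 2*(4*F/h₁) := by ring
    linarith [hs1a, habs]
  have hs1P : s1 ≤ B*C*P := by
    rw [hs1def]
    refine supIcc_le hT0 ?_
    intro t ht
    rw [hd1def]
    calc ‖fderiv ℝ f (qt t) (M⁻¹.mulVec (pt t))‖ ≤ B*(C*P) :=
        op_app_le _ (hB1 _) (hLpb t ht) hB.le
      _ = B*C*P := by ring
  have hs2a : s2 ≤ 2*s1/h₂ + GG*h₂/2 := by
    rw [hs2def]
    exact supIcc_le hT0 (landau2 hh₂pos hh₂T hd1der hd2der hs1t hd3bd)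
  have hs2P : s2 ≤ B*C^2*P^2 + B*C*F := by
    rw [hs2def]
    refine supIcc_le hT0 ?_
    intro t ht
    rw [hd2def]
    simp only [dddp]
    have e1 : ‖fderiv ℝ (fderiv ℝ f) (qt t) (M⁻¹.mulVec (pt t)) (M⁻¹.mulVec (pt t))‖
        ≤ B*(C*P)*(C*P) :=
      op_app_le _ (op_app_le _ (hB2 _) (hLpb t ht) hB.le) (hLpb t ht) hBCP0
    have e2 : ‖fderiv ℝ f (qt t) (M⁻¹.mulVec (f (qt t)))‖ ≤ B*(C*F) :=
      op_app_le _ (hB1 _) (hLgb t ht) hB.le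
    calc ‖_ + _‖ ≤ B*(C*P)*(C*P) + B*(C*F) := le_trans (norm_add_le _ _) (add_le_add e1 e2)
      _ = B*C^2*P^2 + B*C*F := by ring
  -- Gronwall estimate for `(u, v)`
  obtain ⟨W, hWdef⟩ : ∃ x : ℝ, x = (s2/12 + C*s1/6)*EE := ⟨_, rfl⟩
  have hε0 : 0 ≤ s2/12 + C*s1/6 := by linarith [mul_nonneg hC0 hs10, hs20]
  have hW0 : 0 ≤ W := by rw [hWdef]; exact mul_nonneg hε0 hEE0.le
  have huvW : ∀ t ∈ Icc (0:ℝ) T, ‖u t‖ ≤ W ∧ ‖v t‖ ≤ W := by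
    have hzder : ∀ t ∈ Icc (0:ℝ) T, HasDerivAt (fun s => (u s, v s))
        ((M⁻¹.mulVec ((fderiv ℝ f (qt t)) (v t)) + (1/12 : ℝ) • dddp m M⁻¹ f qt pt t,
          u t - (1/6 : ℝ) • dddq m M⁻¹ f qt pt t)) t :=
      fun t ht => (hu t ht).prodMk (hv t ht)
    have hzc : ContinuousOn (fun s => (u s, v s)) (Icc (0:ℝ) T) :=
      fun t ht => (hzder t ht).continuousAt.continuousWithinAt
    have hz0 : ‖(u 0, v 0)‖ ≤ 0 := by
      rw [hu0, hv0, Prod.norm_def]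
      simp
    have hbound : ∀ t ∈ Ico (0:ℝ) T,
        ‖(M⁻¹.mulVec ((fderiv ℝ f (qt t)) (v t)) + (1/12 : ℝ) • dddp m M⁻¹ f qt pt t,
          u t - (1/6 : ℝ) • dddq m M⁻¹ f qt pt t)‖
        ≤ Kg * ‖(u t, v t)‖ + (s2/12 + C*s1/6) := by
      intro t ht'
      have ht : t ∈ Icc (0:ℝ) T := Ico_subset_Icc_self ht'
      have hzn : 0 ≤ ‖(u t, v t)‖ := norm_nonneg _
      have hvz : ‖v t‖ ≤ ‖(u t, v t)‖ := norm_snd_le (u t, v t)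
      have huz : ‖u t‖ ≤ ‖(u t, v t)‖ := norm_fst_le (u t, v t)
      rw [Prod.norm_def]
      apply max_le
      · have e1 : ‖M⁻¹.mulVec ((fderiv ℝ f (qt t)) (v t))‖ ≤ C*(B*‖(u t, v t)‖) := by
          refine (hCb _).trans (mul_le_mul_of_nonneg_left ?_ hC0)
          exact op_app_le _ (hB1 _) hvz hB.le
        have e2 : ‖(1/12 : ℝ) • dddp m M⁻¹ f qt pt t‖ ≤ (1/12)*s2 := by
          rw [norm_smul, hdp t, Real.norm_eq_abs, abs_of_pos (by norm_num : (0:ℝ) < 1/12)]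
          exact mul_le_mul_of_nonneg_left (hs2t t ht) (by norm_num)
        calc ‖M⁻¹.mulVec ((fderiv ℝ f (qt t)) (v t)) + (1/12 : ℝ) • dddp m M⁻¹ f qt pt t‖
            ≤ C*(B*‖(u t, v t)‖) + (1/12)*s2 := le_trans (norm_add_le _ _) (add_le_add e1 e2)
          _ ≤ Kg * ‖(u t, v t)‖ + (s2/12 + C*s1/6) := by
            rw [hKgdef]
            have er : C*(B*‖(u t, v t)‖) = (C*B)*‖(u t, v t)‖ := by ring
            linarith [mul_nonneg hC0 hs10, hzn]
      · have e3 : ‖(1/6 : ℝ) • dddq m M⁻¹ f qt pt t‖ ≤ (1/6)*(C*s1) := by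
          rw [norm_smul, hdq t, Real.norm_eq_abs, abs_of_pos (by norm_num : (0:ℝ) < 1/6)]
          exact mul_le_mul_of_nonneg_left (hLd1b t ht) (by norm_num)
        calc ‖u t - (1/6 : ℝ) • dddq m M⁻¹ f qt pt t‖
            ≤ ‖(u t, v t)‖ + (1/6)*(C*s1) := by
              refine le_trans (norm_sub_le _ _) (add_le_add huz e3)
          _ ≤ Kg * ‖(u t, v t)‖ + (s2/12 + C*s1/6) := by
            rw [hKgdef]
            linarith [mul_nonneg (mul_nonneg hC0 hB.le) hzn, hs20]
    have hgron := norm_le_gronwallBound_of_norm_deriv_right_le (a := 0) (b := T)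
      hzc (fun t ht => (hzder t (Ico_subset_Icc_self ht)).hasDerivWithinAt) hz0 hbound
    intro t ht
    have h := hgron t ht
    rw [sub_zero] at h
    have h2 : ‖(u t, v t)‖ ≤ W := by
      rw [hWdef, hEEdef]
      exact h.trans (gronwall_simple hKg1 hε0 ht.1 ht.2)
    exact ⟨le_trans (norm_fst_le (u t, v t)) h2, le_trans (norm_snd_le (u t, v t)) h2⟩
  -- pointwise bound for `ddu`
  obtain ⟨Du, hDudef⟩ : ∃ x : ℝ, x = C*(B*(C*P)*W + B*(W + (1/6)*(C*s1))) + (1/12)*GG :=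
    ⟨_, rfl⟩
  have hddub : ∀ t ∈ Icc (0:ℝ) T, ‖ddu t‖ ≤ Du := by
    intro t ht
    have hin : HasDerivAt (fun s => (fderiv ℝ f (qt s)) (v s))
        ((fderiv ℝ (fderiv ℝ f) (qt t)) (M⁻¹.mulVec (pt t)) (v t) +
          (fderiv ℝ f (qt t)) (u t - (1/6 : ℝ) • dddq m M⁻¹ f qt pt t)) t :=
      (hfqder t ht).clm_apply (hv t ht)
    have h1 := hLd hin
    have h2 := (hd2der t ht).const_smul (1/12 : ℝ)
    simp only [hd2def] at h2
    have hEq : ddu t = M⁻¹.mulVec ((fderiv ℝ (fderiv ℝ f) (qt t)) (M⁻¹.mulVec (pt t)) (v t) +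
          (fderiv ℝ f (qt t)) (u t - (1/6 : ℝ) • dddq m M⁻¹ f qt pt t)) + (1/12 : ℝ) • d3 t :=
      (hddu t ht).unique (h1.add h2)
    rw [hEq]
    have e3 : ‖(1/6 : ℝ) • dddq m M⁻¹ f qt pt t‖ ≤ (1/6)*(C*s1) := by
      rw [norm_smul, hdq t, Real.norm_eq_abs, abs_of_pos (by norm_num : (0:ℝ) < 1/6)]
      exact mul_le_mul_of_nonneg_left (hLd1b t ht) (by norm_num)
    have e1 : ‖(fderiv ℝ (fderiv ℝ f) (qt t)) (M⁻¹.mulVec (pt t)) (v t)‖ ≤ B*(C*P)*W :=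
      op_app_le _ (op_app_le _ (hB2 _) (hLpb t ht) hB.le) ((huvW t ht).2) hBCP0
    have e2 : ‖u t - (1/6 : ℝ) • dddq m M⁻¹ f qt pt t‖ ≤ W + (1/6)*(C*s1) :=
      le_trans (norm_sub_le _ _) (add_le_add (huvW t ht).1 e3)
    have e4 : ‖(fderiv ℝ f (qt t)) (u t - (1/6 : ℝ) • dddq m M⁻¹ f qt pt t)‖
        ≤ B*(W + (1/6)*(C*s1)) := op_app_le _ (hB1 _) e2 hB.le
    have e5 : ‖(fderiv ℝ (fderiv ℝ f) (qt t)) (M⁻¹.mulVec (pt t)) (v t) +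
        (fderiv ℝ f (qt t)) (u t - (1/6 : ℝ) • dddq m M⁻¹ f qt pt t)‖
        ≤ B*(C*P)*W + B*(W + (1/6)*(C*s1)) := le_trans (norm_add_le _ _) (add_le_add e1 e4)
    have e6 : ‖M⁻¹.mulVec ((fderiv ℝ (fderiv ℝ f) (qt t)) (M⁻¹.mulVec (pt t)) (v t) +
        (fderiv ℝ f (qt t)) (u t - (1/6 : ℝ) • dddq m M⁻¹ f qt pt t))‖
        ≤ C*(B*(C*P)*W + B*(W + (1/6)*(C*s1))) :=
      (hCb _).trans (mul_le_mul_of_nonneg_left e5 hC0)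
    have e7 : ‖(1/12 : ℝ) • d3 t‖ ≤ (1/12)*GG := by
      rw [norm_smul, Real.norm_eq_abs, abs_of_pos (by norm_num : (0:ℝ) < 1/12)]
      exact mul_le_mul_of_nonneg_left (hd3bd t ht) (by norm_num)
    rw [hDudef]
    exact le_trans (norm_add_le _ _) (add_le_add e6 e7)
  -- pointwise bound for `ddv`
  obtain ⟨Dv, hDvdef⟩ : ∃ x : ℝ, x = (C*(B*W) + (1/12)*s2) + (1/6)*(C*s2) := ⟨_, rfl⟩
  have hddvb : ∀ t ∈ Icc (0:ℝ) T, ‖ddv t‖ ≤ Dv := by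
    intro t ht
    have h2 := (hLd (hd1der t ht)).const_smul (1/6 : ℝ)
    have hEq : ddv t = (M⁻¹.mulVec ((fderiv ℝ f (qt t)) (v t)) +
        (1/12 : ℝ) • dddp m M⁻¹ f qt pt t) - (1/6 : ℝ) • M⁻¹.mulVec (d2 t) :=
      (hddv t ht).unique ((hu t ht).sub h2)
    rw [hEq]
    have e1 : ‖M⁻¹.mulVec ((fderiv ℝ f (qt t)) (v t))‖ ≤ C*(B*W) :=
      (hCb _).trans (mul_le_mul_of_nonneg_left
        (op_app_le _ (hB1 _) ((huvW t ht).2) hB.le) hC0)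
    have e2 : ‖(1/12 : ℝ) • dddp m M⁻¹ f qt pt t‖ ≤ (1/12)*s2 := by
      rw [norm_smul, hdp t, Real.norm_eq_abs, abs_of_pos (by norm_num : (0:ℝ) < 1/12)]
      exact mul_le_mul_of_nonneg_left (hs2t t ht) (by norm_num)
    have e3 : ‖(1/6 : ℝ) • M⁻¹.mulVec (d2 t)‖ ≤ (1/6)*(C*s2) := by
      rw [norm_smul, Real.norm_eq_abs, abs_of_pos (by norm_num : (0:ℝ) < 1/6)]
      exact mul_le_mul_of_nonneg_left (hLd2b t ht) (by norm_num)
    rw [hDvdef]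
    refine le_trans (norm_sub_le _ _) (add_le_add ?_ e3)
    exact le_trans (norm_add_le _ _) (add_le_add e1 e2)
  have hSu : supIcc m T u ≤ W := supIcc_le hT0 (fun t ht => (huvW t ht).1)
  have hSv : supIcc m T v ≤ W := supIcc_le hT0 (fun t ht => (huvW t ht).2)
  have hSddu : supIcc m T ddu ≤ Du := supIcc_le hT0 hddub
  have hSddv : supIcc m T ddv ≤ Dv := supIcc_le hT0 hddvb
  exact final_arith B C h₁ h₂ EE ca c1 c2 c3 c4 cW1 cW2 K P F s1 s2 W GG Du Dv
    (supIcc m T u) (supIcc m T v) (supIcc m T ddu) (supIcc m T ddv)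
    hB hC0 hh₁pos hh₂pos hEE0 hcadef hc2def hc1def hc3def hc4def hcW1def hcW2def hKdef
    hP0 hF0 hs10 hs20 hGGeq hs1b hs1P hs2a hs2P hWdef hDudef hDvdef hSu hSv hSddu hSddv
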